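/- Let S be a comonad on a finitely complete category B. If the underlying functor of S preserves finite limits, then the forgetful functor L : S-CoAlg → B from the category of S-coalgebras reflects exponentiable objects: if y is an S-coalgebra such that L(y) is an exponentiable object of B, then y is exponentiable in S-CoAlg. -/

import Mathlib

open CategoryTheory CategoryTheory.Limits

/-- Let `S` be a comonad on a finitely complete category `B` whose underlying functor
preserves finite limits.  Then the forgetful functor from `S`-coalgebras reflects
exponentiable objects: if the underlying object of a coalgebra `y` is exponentiable in
`B`, then `y` is exponentiable in the category of `S`-coalgebras. -/
theorem comonad_forget_reflects_exponentiable {B : Type*} [Category B]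
    [HasFiniteLimits B] [CartesianMonoidalCategory B] (S : Comonad B)
    [PreservesFiniteLimits (S : B ⥤ B)]
    [CartesianMonoidalCategory (Comonad.Coalgebra S)]
    (y : Comonad.Coalgebra S) (h : Closed ((Comonad.forget S).obj y)) :
    Nonempty (Closed y) := by
  -- the forgetful functor
  let L := Comonad.forget S
  -- Coalgebras have equalizers since `S` preserves them and `B` has them
  have hce : HasCoreflexiveEqualizers (Comonad.Coalgebra S) := by
    have : HasEqualizers (Comonad.Coalgebra S) := by
      constructor
      intro D
      exact Comonad.forget_creates_limits_of_comonad_preserves D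
    infer_instance
  -- `L ⋙ tensorLeft (L.obj y)` is a left adjoint
  have h1 : (L ⋙ MonoidalCategory.tensorLeft (L.obj y)).IsLeftAdjoint :=
    ((Comonad.adj S).comp h.adj).isLeftAdjoint
  -- `L` preserves binary products
  have hp : ∀ X : Comonad.Coalgebra S, PreservesLimit (pair y X) L := by
    intro X
    have : HasLimit (pair y X ⋙ L) := inferInstance
    have : CreatesLimit (pair y X) L := inferInstance
    exact preservesLimit_of_createsLimit_and_hasLimit _ _
  -- the commuting triangle: `tensorLeft y ⋙ L ≅ L ⋙ tensorLeft (L.obj y)`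
  have h2 : (MonoidalCategory.tensorLeft y ⋙ L).IsLeftAdjoint := by
    have hiso : MonoidalCategory.tensorLeft y ⋙ L ≅
        L ⋙ MonoidalCategory.tensorLeft (L.obj y) :=
      CartesianMonoidalCategory.prodComparisonNatIso L y
    exact ((Adjunction.ofIsLeftAdjoint (L ⋙ MonoidalCategory.tensorLeft (L.obj y))).ofNatIsoLeft
      hiso.symm).isLeftAdjoint
  have h3 : (MonoidalCategory.tensorLeft y).IsLeftAdjoint :=
    isLeftAdjoint_triangle_lift_comonadic L
  obtain ⟨R, ⟨adj⟩⟩ := h3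
  exact ⟨Closed.mk R adj⟩
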